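/- Let X be a completely regular Hausdorff (Tychonoff) space and let {G_i : i ∈ I} be a collection of ideals of C_B(X). Then λ_{∑_{i∈I} G_i} X = ⋃_{i∈I} λ_{G_i} X, where ∑_{i∈I} G_i denotes the ideal generated by the union of the G_i (the sum of the ideals G_i). -/

import Mathlib

open BoundedContinuousFunction Set Filter Topology

section Preamble

variable {X : Type*} [TopologicalSpace X] {𝕜 : Type*} [RCLike 𝕜]

theorem betaExt_aux (f : X →ᵇ 𝕜) :
    Continuous (fun x => (⟨f x, by
      simpa [Metric.mem_closedBall, dist_zero_right] using f.norm_coe_le_norm x⟩ :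
        Metric.closedBall (0 : 𝕜) ‖f‖)) :=
  f.continuous.subtype_mk _

/-- `f_β`, the unique continuous extension of a bounded continuous function `f : X → 𝕜` to the
Stone–Čech compactification `βX`. -/
noncomputable def betaExt (f : X →ᵇ 𝕜) : StoneCech X → 𝕜 :=
  haveI : CompactSpace (Metric.closedBall (0 : 𝕜) ‖f‖) :=
    isCompact_iff_compactSpace.mp (isCompact_closedBall 0 ‖f‖)
  fun p => (stoneCechExtend (betaExt_aux f) p).1

theorem betaExt_unit (f : X →ᵇ 𝕜) (x : X) : betaExt f (stoneCechUnit x) = f x := by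
  haveI : CompactSpace (Metric.closedBall (0 : 𝕜) ‖f‖) :=
    isCompact_iff_compactSpace.mp (isCompact_closedBall 0 ‖f‖)
  exact congrArg Subtype.val (congrFun (stoneCechExtend_extends (betaExt_aux f)) x)

theorem continuous_betaExt (f : X →ᵇ 𝕜) : Continuous (betaExt f) := by
  haveI : CompactSpace (Metric.closedBall (0 : 𝕜) ‖f‖) :=
    isCompact_iff_compactSpace.mp (isCompact_closedBall 0 ‖f‖)
  exact continuous_subtype_val.comp (continuous_stoneCechExtend _)

/-- `λ_G X`, the union over `g ∈ G` of the cozero-sets in `βX` of the extensions `g_β`. -/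
def lambdaSet (G : Ideal (X →ᵇ 𝕜)) : Set (StoneCech X) :=
  ⋃ g ∈ G, {p | betaExt g p ≠ 0}

end Preamble

section Aux

variable {X : Type*} [TopologicalSpace X] {𝕜 : Type*} [RCLike 𝕜]

theorem betaExt_zero : betaExt (0 : X →ᵇ 𝕜) = 0 := by
  apply Continuous.ext_on denseRange_stoneCechUnit (continuous_betaExt _)
    continuous_const
  rintro _ ⟨x, rfl⟩
  rw [betaExt_unit]
  rfl

theorem betaExt_add (f g : X →ᵇ 𝕜) : betaExt (f + g) = betaExt f + betaExt g := by
  apply Continuous.ext_on denseRange_stoneCechUnit (continuous_betaExt _)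
    ((continuous_betaExt f).add (continuous_betaExt g))
  rintro _ ⟨x, rfl⟩
  simp [betaExt_unit]

end Aux


/-- For a Tychonoff space `X` and a family `{G_i : i ∈ I}` of ideals of `C_B(X)`,
`λ_{∑_{i∈I} G_i} X = ⋃_{i∈I} λ_{G_i} X`. -/
theorem lambdaSet_iSup {X : Type*} [TopologicalSpace X] [T35Space X]
    {𝕜 : Type*} [RCLike 𝕜] {I : Type*} (G : I → Ideal (X →ᵇ 𝕜)) :
    lambdaSet (⨆ i, G i) = ⋃ i, lambdaSet (G i) := by
  apply Set.Subset.antisymm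
  · intro p hp
    obtain ⟨g, hg, hgp⟩ := by simpa [lambdaSet] using hp
    revert hgp
    refine Submodule.iSup_induction (motive := fun g => betaExt g p ≠ 0 → p ∈ ⋃ i, lambdaSet (G i))
      G hg (fun i x hx hxp => ?_) (fun h => absurd (congrFun betaExt_zero p) h) ?_
    · exact Set.mem_iUnion.mpr ⟨i, Set.mem_iUnion₂.mpr ⟨x, hx, hxp⟩⟩
    · intro x y hx hy hxy
      rcases (by simpa using congrFun (betaExt_add x y) p) with h
      by_cases h1 : betaExt x p = 0
      · exact hy (fun h2 => hxy (by rw [h, h1, h2, add_zero]))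
      · exact hx h1
  · refine Set.iUnion_subset fun i => ?_
    intro p hp
    obtain ⟨g, hg, hgp⟩ := by simpa [lambdaSet] using hp
    exact Set.mem_iUnion₂.mpr ⟨g, (le_iSup G i) hg, hgp⟩
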